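/- Selfadjoint elements of B₀ with finite spectrum (i.e., real-valued sequences with finite range) are not dense in the set of selfadjoint elements of B₀: for the sequence a(n) = 1/n, every real-valued b ∈ B₀ with finite range satisfies ‖b − a‖ ≥ 1, where ‖x‖ = ‖x‖_∞ + sup_n n·|x(n) − λ(x)|. -/

import Mathlib

open Filter Topology

/-- selfadjoint elements of `B₀` with finite spectrum (real-valued sequences
with finite range) are not dense in the selfadjoint part of `B₀`: for `a(n) = 1/n`,
every real-valued `b ∈ B₀` with finite range has `‖b - a‖ ≥ 1`, where
`‖x‖ = ‖x‖_∞ + sup_n n |x(n) - λ(x)|` (here `λ(b - a) = lb - 0 = lb`). -/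
theorem B0_finite_spectrum_not_dense (b : ℕ → ℝ) (lb wb : ℝ)
    (hb : Tendsto b atTop (𝓝 lb))
    (hwb : Tendsto (fun n : ℕ => (n : ℝ) * (b n - lb)) atTop (𝓝 wb))
    (hfin : (Set.range b).Finite) :
    1 ≤ (⨆ n : ℕ, |b n - 1 / (n : ℝ)|)
        + ⨆ n : ℕ, (n : ℝ) * |b n - 1 / (n : ℝ) - lb| := by
  -- b is eventually equal to lb
  have hT : (Set.range b \ {lb}).Finite := hfin.diff
  have hcl : IsClosed (Set.range b \ {lb}) := hT.isClosed
  have hmem : (Set.range b \ {lb})ᶜ ∈ 𝓝 lb :=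
    hcl.isOpen_compl.mem_nhds (by simp)
  have hev : ∀ᶠ n in atTop, b n = lb := by
    filter_upwards [hb.eventually_mem hmem] with n hn
    by_contra h
    exact hn ⟨Set.mem_range_self n, h⟩
  obtain ⟨N, hN⟩ := eventually_atTop.mp hev
  set N' := max N 1 with hN'
  set f : ℕ → ℝ := fun n => (n : ℝ) * |b n - 1 / (n : ℝ) - lb| with hf
  have hfval : ∀ n ≥ N', f n = 1 := by
    intro n hn
    have h1 : 1 ≤ n := le_trans (le_max_right N 1) hn
    have hb' : b n = lb := hN n (le_trans (le_max_left N 1) hn)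
    have hn0 : (n : ℝ) ≠ 0 := by positivity
    simp only [hf, hb']
    rw [show lb - 1 / (n : ℝ) - lb = -(1 / (n : ℝ)) by ring, abs_neg,
      abs_of_pos (by positivity : (0:ℝ) < 1 / (n:ℝ))]
    field_simp
  have hbdd : BddAbove (Set.range f) := by
    have hsub : Set.range f ⊆ (f '' {n | n < N'}) ∪ {1} := by
      rintro x ⟨n, rfl⟩
      rcases lt_or_ge n N' with h | h
      · exact Or.inl ⟨n, h, rfl⟩
      · exact Or.inr (hfval n h)
    exact (((Set.finite_Iio N').image f).union (Set.finite_singleton 1)).bddAbove.mono hsub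
  have h2 : 1 ≤ ⨆ n : ℕ, f n := by
    have := le_ciSup hbdd N'
    rw [hfval N' le_rfl] at this
    exact this
  have h1 : 0 ≤ ⨆ n : ℕ, |b n - 1 / (n : ℝ)| :=
    Real.iSup_nonneg fun n => abs_nonneg _
  linarith
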